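/- Let (X, ≼, s) be an MCS Model. Define d_c(x₁,x₂) = 0 if s(x₁) = s(x₂) = 0, and d_c(x₁,x₂) = 1 − s'({x₁,x₂}) / max{s(x₁), s(x₂)} otherwise. Then d_c is a metric on X: it is nonnegative, d_c(x,x) = 0, it is symmetric, it satisfies the triangle inequality, and d_c(x₁,x₂) = 0 implies x₁ = x₂. -/

import Mathlib

lemma tri_real (a b c p q r : ℝ) (ha : 0 ≤ a) (hb : 0 ≤ b) (hc : 0 < c)
    (hac : a ≤ c) (hp0 : 0 ≤ p) (hpa : p ≤ a) (hpb : p ≤ b)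
    (hq0 : 0 ≤ q) (hqb : q ≤ b) (hqc : q ≤ c)
    (hr0 : 0 ≤ r) (hr : p + q - b ≤ r) :
    p / max a b + q / max b c ≤ 1 + r / c := by
  rcases eq_or_lt_of_le hb with hb0 | hb0
  · have hp : p = 0 := le_antisymm (hb0 ▸ hpb) hp0
    have hq : q = 0 := le_antisymm (hb0 ▸ hqb) hq0
    rw [hp, hq]
    simp
    positivity
  · rcases le_or_gt (p + q) b with hpq | hpq
    · have h1 : p / max a b ≤ p / b := by gcongr; exact le_max_right a b
      have h2 : q / max b c ≤ q / b := by gcongr; exact le_max_left b c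
      have h3 : p / b + q / b ≤ 1 := by
        rw [← add_div, div_le_one hb0]; exact hpq
      have h4 : 0 ≤ r / c := div_nonneg hr0 hc.le
      linarith
    · rcases le_total b a with hba | hab
      · have h0a : 0 < a := lt_of_lt_of_le hb0 hba
        rw [max_eq_left hba, max_eq_right (le_trans hba hac)]
        have h1 : (b - p) / c ≤ (b - p) / a := by gcongr
        have h2 : q / c = (p + q - b) / c + (b - p) / c := by ring
        have h3 : (p + q - b) / c ≤ r / c := by gcongr
        have h4 : p / a + (b - p) / a ≤ 1 := by
          rw [← add_div]
          have : p + (b - p) = b := by ring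
          rw [this, div_le_one h0a]; exact hba
        linarith
      · rcases le_total b c with hbc | hcb
        · rw [max_eq_right hab, max_eq_right hbc]
          have h1 : (b - p) / c ≤ (b - p) / b := by gcongr
          have h2 : q / c = (p + q - b) / c + (b - p) / c := by ring
          have h3 : (p + q - b) / c ≤ r / c := by gcongr
          have h4 : p / b + (b - p) / b ≤ 1 := by
            rw [← add_div]
            have : p + (b - p) = b := by ring
            rw [this, div_le_one hb0]
          linarith
        · rw [max_eq_right hab, max_eq_left hcb]
          have h3 : (p + q - b) / c ≤ r / c := by gcongr
          have h1 : (p + q - b) / b ≤ (p + q - b) / c := by gcongr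
          have h4 : p / b + q / b - (p + q - b) / b = 1 := by
            field_simp
            ring
          linarith

/-- In an MCS Model, `d_c(x₁,x₂) = 0` if `s(x₁) = s(x₂) = 0` and
`d_c(x₁,x₂) = 1 − s'({x₁,x₂}) / max{s(x₁),s(x₂)}` otherwise, is a metric on `X`. -/
theorem mcs_dc_is_metric {X : Type*} (le : X → X → Prop)
    (hrefl : ∀ x, le x x)
    (htrans : ∀ x y z, le x y → le y z → le x z)
    (hantisymm : ∀ x y, le x y → le y x → x = y)
    (s : X → ℝ) (hs : ∀ x, 0 ≤ s x)
    (hS1 : ∀ x y, le x y → s x ≤ s y)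
    (hS2 : ∀ x y, le x y → s x = s y → x = y)
    (s' : X → X → ℝ)
    (hA1 : ∀ x y, IsGreatest {t : ℝ | ∃ z, le z x ∧ le z y ∧ s z = t} (s' x y))
    (hA2 : ∀ x y w, le x w → le y w → ∃ z, le z x ∧ le z y ∧ s x + s y - s z ≤ s w)
    (d : X → X → ℝ)
    (hd0 : ∀ x₁ x₂, s x₁ = 0 → s x₂ = 0 → d x₁ x₂ = 0)
    (hd1 : ∀ x₁ x₂, ¬ (s x₁ = 0 ∧ s x₂ = 0) →
      d x₁ x₂ = 1 - s' x₁ x₂ / max (s x₁) (s x₂)) :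
    (∀ x₁ x₂, 0 ≤ d x₁ x₂) ∧
    (∀ x, d x x = 0) ∧
    (∀ x₁ x₂, d x₁ x₂ = d x₂ x₁) ∧
    (∀ x₁ x₂ x₃, d x₁ x₃ ≤ d x₁ x₂ + d x₂ x₃) ∧
    (∀ x₁ x₂, d x₁ x₂ = 0 → x₁ = x₂) := by
  have hub : ∀ x y z, le z x → le z y → s z ≤ s' x y :=
    fun x y z h1 h2 => (hA1 x y).2 ⟨z, h1, h2, rfl⟩
  have hmem : ∀ x y, ∃ z, le z x ∧ le z y ∧ s z = s' x y := fun x y => (hA1 x y).1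
  have hle1 : ∀ x y, s' x y ≤ s x := by
    intro x y
    obtain ⟨z, h1, _, h3⟩ := hmem x y
    rw [← h3]; exact hS1 _ _ h1
  have hle2 : ∀ x y, s' x y ≤ s y := by
    intro x y
    obtain ⟨z, _, h2, h3⟩ := hmem x y
    rw [← h3]; exact hS1 _ _ h2
  have hnn : ∀ x y, 0 ≤ s' x y := by
    intro x y
    obtain ⟨z, _, _, h3⟩ := hmem x y
    rw [← h3]; exact hs z
  have hsym : ∀ x y, s' x y = s' y x := by
    intro x y
    apply le_antisymm
    · obtain ⟨z, h1, h2, h3⟩ := hmem x y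
      rw [← h3]; exact hub y x z h2 h1
    · obtain ⟨z, h1, h2, h3⟩ := hmem y x
      rw [← h3]; exact hub x y z h2 h1
  have hself : ∀ x, s' x x = s x :=
    fun x => le_antisymm (hle1 x x) (hub x x x (hrefl x) (hrefl x))
  have hMpos : ∀ x y, ¬(s x = 0 ∧ s y = 0) → 0 < max (s x) (s y) := by
    intro x y h
    rcases not_and_or.mp h with h' | h'
    · exact lt_max_of_lt_left ((hs x).lt_of_ne (Ne.symm h'))
    · exact lt_max_of_lt_right ((hs y).lt_of_ne (Ne.symm h'))
  have hnneg_d : ∀ x y, 0 ≤ d x y := by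
    intro x y
    by_cases h : s x = 0 ∧ s y = 0
    · rw [hd0 x y h.1 h.2]
    · rw [hd1 x y h]
      have hM : 0 < max (s x) (s y) := hMpos x y h
      have h2 : s' x y ≤ max (s x) (s y) := le_trans (hle1 x y) (le_max_left _ _)
      have h3 : s' x y / max (s x) (s y) ≤ 1 := (div_le_one hM).mpr h2
      linarith
  have hsym_d : ∀ x y, d x y = d y x := by
    intro x y
    by_cases h : s x = 0 ∧ s y = 0
    · rw [hd0 x y h.1 h.2, hd0 y x h.2 h.1]
    · rw [hd1 x y h, hd1 y x (by tauto), hsym, max_comm]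
  refine ⟨hnneg_d, ?_, hsym_d, ?_, ?_⟩
  · intro x
    by_cases h : s x = 0
    · exact hd0 x x h h
    · rw [hd1 x x (by tauto), hself, max_self, div_self h]; ring
  · -- triangle inequality
    have key : ∀ x₁ x₂ x₃, s x₁ ≤ s x₃ → d x₁ x₃ ≤ d x₁ x₂ + d x₂ x₃ := by
      intro x₁ x₂ x₃ hac
      by_cases h13 : s x₁ = 0 ∧ s x₃ = 0
      · rw [hd0 _ _ h13.1 h13.2]
        exact add_nonneg (hnneg_d _ _) (hnneg_d _ _)
      · have hc : 0 < s x₃ := by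
          rcases not_and_or.mp h13 with h | h
          · exact lt_of_lt_of_le ((hs x₁).lt_of_ne (Ne.symm h)) hac
          · exact (hs x₃).lt_of_ne (Ne.symm h)
        obtain ⟨z12, hz1, hz2, hz12⟩ := hmem x₁ x₂
        obtain ⟨z23, hz3, hz4, hz23⟩ := hmem x₂ x₃
        obtain ⟨z, hza, hzb, hzc⟩ := hA2 z12 z23 x₂ hz2 hz3
        have hkey : s' x₁ x₂ + s' x₂ x₃ - s x₂ ≤ s' x₁ x₃ := by
          have h1 : s z ≤ s' x₁ x₃ :=
            hub _ _ z (htrans _ _ _ hza hz1) (htrans _ _ _ hzb hz4)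
          rw [← hz12, ← hz23]
          linarith
        rw [hd1 x₁ x₃ h13, max_eq_right hac]
        by_cases h12 : s x₁ = 0 ∧ s x₂ = 0
        · -- s x₁ = s x₂ = 0, so s'₁₃ = 0, s'₂₃ = 0 and d x₁ x₂ = 0
          have hs13 : s' x₁ x₃ = 0 := le_antisymm (h12.1 ▸ hle1 x₁ x₃) (hnn _ _)
          have hs23 : s' x₂ x₃ = 0 := le_antisymm (h12.2 ▸ hle1 x₂ x₃) (hnn _ _)
          rw [hd0 x₁ x₂ h12.1 h12.2, hd1 x₂ x₃ (by intro h; exact hc.ne' h.2),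
            hs13, hs23]
          simp
        · have h23 : ¬(s x₂ = 0 ∧ s x₃ = 0) := by intro h; exact hc.ne' h.2
          rw [hd1 x₁ x₂ h12, hd1 x₂ x₃ h23]
          have := tri_real (s x₁) (s x₂) (s x₃) (s' x₁ x₂) (s' x₂ x₃) (s' x₁ x₃)
            (hs x₁) (hs x₂) hc hac (hnn _ _) (hle1 _ _) (hle2 _ _)
            (hnn _ _) (hle1 _ _) (hle2 _ _) (hnn _ _) hkey
          linarith
    intro x₁ x₂ x₃
    rcases le_total (s x₁) (s x₃) with h | h
    · exact key x₁ x₂ x₃ h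
    · have := key x₃ x₂ x₁ h
      rw [hsym_d x₁ x₃, hsym_d x₁ x₂, hsym_d x₂ x₃]
      linarith
  · intro x₁ x₂ h
    by_cases h0 : s x₁ = 0 ∧ s x₂ = 0
    · obtain ⟨z, hz1, hz2, _⟩ := hmem x₁ x₂
      have hz0 : s z = 0 := le_antisymm (h0.1 ▸ hS1 _ _ hz1) (hs z)
      have e1 : z = x₁ := hS2 _ _ hz1 (hz0.trans h0.1.symm)
      have e2 : z = x₂ := hS2 _ _ hz2 (hz0.trans h0.2.symm)
      rw [← e1, e2]
    · rw [hd1 _ _ h0] at h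
      have hM : 0 < max (s x₁) (s x₂) := hMpos x₁ x₂ h0
      have hmax : s' x₁ x₂ = max (s x₁) (s x₂) := by
        have : s' x₁ x₂ / max (s x₁) (s x₂) = 1 := by linarith
        field_simp at this
        linarith
      have e1' : s' x₁ x₂ = s x₁ :=
        le_antisymm (hle1 _ _) (hmax ▸ le_max_left _ _)
      have e2' : s' x₁ x₂ = s x₂ :=
        le_antisymm (hle2 _ _) (hmax ▸ le_max_right _ _)
      obtain ⟨z, hz1, hz2, hz3⟩ := hmem x₁ x₂
      have ez1 : z = x₁ := hS2 _ _ hz1 (hz3.trans e1')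
      have ez2 : z = x₂ := hS2 _ _ hz2 (hz3.trans e2')
      rw [← ez1, ez2]
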